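/- Suppose d is a positive integer with r = ord₃(d) ≥ 2, and x, y, n are integers with n ≥ 2 satisfying (x+1)² + ... + (x+d)² = yⁿ. Then n divides r − 1. -/

import Mathlib

lemma six_mul_sum (d : ℕ) (x : ℤ) :
    6 * ∑ i ∈ Finset.range d, (x + (i : ℤ) + 1) ^ 2 =
      (d : ℤ) * (6 * x ^ 2 + 6 * x * (d + 1) + (d + 1) * (2 * d + 1)) := by
  induction d with
  | zero => simp
  | succ d ih =>
    rw [Finset.sum_range_succ, mul_add]
    push_cast
    push_cast at ih
    linear_combination ih

theorem exponent_divides_of_three_adic_valuation (d : ℕ) (hd : 0 < d)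
    (hr : 2 ≤ padicValNat 3 d) (n : ℕ) (hn : 2 ≤ n) (x y : ℤ)
    (h : ∑ i ∈ Finset.range d, (x + (i : ℤ) + 1) ^ 2 = y ^ n) :
    n ∣ padicValNat 3 d - 1 := by
  haveI : Fact (Nat.Prime 3) := ⟨by norm_num⟩
  set A : ℤ := 6 * x ^ 2 + 6 * x * (d + 1) + (d + 1) * (2 * d + 1) with hA
  have key : 6 * y ^ n = (d : ℤ) * A := by rw [← h]; exact six_mul_sum d x
  -- 3 ∣ d
  have h3d : (3 : ℤ) ∣ (d : ℤ) := by
    have : 3 ∣ d := dvd_trans (dvd_pow_self 3 (by omega : padicValNat 3 d ≠ 0))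
      (by simpa using pow_padicValNat_dvd (p := 3) (n := d))
    exact_mod_cast this
  obtain ⟨k, hk⟩ := h3d
  have hAeq : A = 3 * (2*x^2 + 2*x*(3*k+1) + 6*k^2 + 3*k) + 1 := by
    rw [hA, hk]; ring
  have hAnd : ¬ (3 : ℤ) ∣ A := by
    intro ⟨m, hm⟩
    rw [hAeq] at hm
    omega
  have hA0 : A ≠ 0 := by intro h0; rw [h0] at hAnd; exact hAnd (dvd_zero 3)
  have hy0 : y ≠ 0 := by
    rintro rfl
    rw [zero_pow (by omega), mul_zero] at key
    rcases mul_eq_zero.mp key.symm with h' | h'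
    · exact absurd h' (by exact_mod_cast hd.ne')
    · exact hA0 h'
  have hvA : padicValInt 3 A = 0 := padicValInt.eq_zero_of_not_dvd hAnd
  have hyn : (y : ℤ) ^ n ≠ 0 := pow_ne_zero _ hy0
  have e1 : padicValInt 3 (6 * y ^ n) = 1 + n * padicValInt 3 y := by
    rw [padicValInt.mul (by norm_num) hyn]
    congr 1
    · rw [show (6:ℤ) = 2 * 3 by norm_num, padicValInt.mul (by norm_num) (by norm_num),
        padicValInt.eq_zero_of_not_dvd (by norm_num), zero_add,
        show (3:ℤ) = ((3:ℕ):ℤ) by norm_num, padicValInt.self (by norm_num)]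
    · rw [padicValInt, Int.natAbs_pow, padicValNat.pow _ n]
      rfl
  have e2 : padicValInt 3 ((d : ℤ) * A) = padicValNat 3 d := by
    rw [padicValInt.mul (by exact_mod_cast hd.ne') hA0, hvA, add_zero, padicValInt.of_nat]
  rw [key, e2] at e1
  exact ⟨padicValInt 3 y, by omega⟩
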